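/- Let A be an n×n Metzler matrix. Then A is Hurwitz (all eigenvalues have strictly negative real parts) if and only if there exists a vector x ∈ ℝⁿ with all entries strictly positive such that Ax has all entries strictly negative. -/

import Mathlib

open Matrix Polynomial

variable {m : Type*} [Fintype m] [DecidableEq m]

/-- Spectral abscissa: the largest real part among the (complex) eigenvalues. -/
noncomputable def specAbscissa (M : Matrix m m ℝ) : ℝ :=
  sSup {x : ℝ | ∃ μ ∈ M.charpoly.aroots ℂ, x = μ.re}

/-- Spectral radius: the largest modulus among the (complex) eigenvalues. -/
noncomputable def specRadius (M : Matrix m m ℝ) : ℝ :=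
  sSup {x : ℝ | ∃ μ ∈ M.charpoly.aroots ℂ, x = ‖μ‖}

/-- A matrix is Metzler if all off-diagonal entries are nonnegative. -/
def IsMetzler (A : Matrix m m ℝ) : Prop := ∀ i j, i ≠ j → 0 ≤ A i j

/-- A matrix is Hurwitz if all its eigenvalues have strictly negative real part. -/
def IsHurwitz (A : Matrix m m ℝ) : Prop := ∀ μ ∈ A.charpoly.aroots ℂ, μ.re < 0

/-- A matrix is irreducible if its associated digraph is strongly connected. -/
def IsIrreducibleMat (A : Matrix m m ℝ) : Prop :=
  ∀ i j : m, Relation.ReflTransGen (fun a b => A a b ≠ 0) i j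

section MetzlerAux
open Filter Topology
open scoped ENNReal NNReal

lemma det_charmatrix_eval {n : ℕ} (M : Matrix (Fin n) (Fin n) ℂ) (μ : ℂ) :
    M.charpoly.eval μ = (Matrix.scalar (Fin n) μ - M).det := by
  rw [Matrix.charpoly, ← Polynomial.coe_evalRingHom, RingHom.map_det]
  congr 1
  ext i j
  by_cases h : i = j <;>
    simp [Matrix.charmatrix_apply, h, Matrix.scalar_apply, Matrix.diagonal, Matrix.one_apply]

lemma mem_aroots_iff_det {n : ℕ} (A : Matrix (Fin n) (Fin n) ℝ) (μ : ℂ) :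
    μ ∈ A.charpoly.aroots ℂ ↔
      (Matrix.scalar (Fin n) μ - A.map (algebraMap ℝ ℂ)).det = 0 := by
  rw [Polynomial.mem_aroots, ← det_charmatrix_eval]
  constructor
  · rintro ⟨-, h⟩
    rwa [Polynomial.aeval_def, Polynomial.eval₂_eq_eval_map, ← Matrix.charpoly_map] at h
  · intro h
    refine ⟨(A.charpoly_monic).ne_zero, ?_⟩
    rwa [Polynomial.aeval_def, Polynomial.eval₂_eq_eval_map, ← Matrix.charpoly_map]

lemma mem_spectrum_iff_det {n : ℕ} (M : Matrix (Fin n) (Fin n) ℂ) (μ : ℂ) :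
    μ ∈ spectrum ℂ M ↔ (Matrix.scalar (Fin n) μ - M).det = 0 := by
  rw [spectrum.mem_iff, Matrix.isUnit_iff_isUnit_det, isUnit_iff_ne_zero, not_ne_iff]
  rw [Matrix.algebraMap_eq_diagonal]
  rfl

section MetzlerAuxForward

attribute [local instance] Matrix.linftyOpNormedRing Matrix.linftyOpNormedAlgebra

lemma forward_dir {n : ℕ} (A : Matrix (Fin n) (Fin n) ℝ) (hA : IsMetzler A)
    (hH : IsHurwitz A) :
    ∃ x : Fin n → ℝ, (∀ i, 0 < x i) ∧ ∀ i, A.mulVec x i < 0 := by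
  rcases Nat.eq_zero_or_pos n with hn | hn
  · subst hn
    exact ⟨fun _ => 1, fun i => i.elim0, fun i => i.elim0⟩
  haveI : NeZero n := ⟨hn.ne'⟩
  haveI : CompleteSpace (Matrix (Fin n) (Fin n) ℂ) := FiniteDimensional.complete ℂ _
  classical
  set R : Finset ℂ := (A.charpoly.aroots ℂ).toFinset with hRdef
  set s : ℝ := 1 + (∑ i, |A i i|) + ∑ μ ∈ R, (‖μ‖)^2 / (2 * (-μ.re)) with hsdef
  have hRneg : ∀ μ ∈ R, μ.re < 0 := fun μ hμ => hH μ (Multiset.mem_toFinset.mp hμ)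
  have hterm : ∀ μ ∈ R, 0 ≤ (‖μ‖)^2 / (2 * (-μ.re)) := by
    intro μ hμ
    have h1 := hRneg μ hμ
    have h2 : (0:ℝ) ≤ (‖μ‖)^2 := sq_nonneg _
    exact div_nonneg h2 (by linarith)
  have hsumR : (0:ℝ) ≤ ∑ μ ∈ R, (‖μ‖)^2 / (2 * (-μ.re)) :=
    Finset.sum_nonneg hterm
  have hsumD : (0:ℝ) ≤ ∑ i, |A i i| := Finset.sum_nonneg fun i _ => abs_nonneg _
  have hs1 : ∀ i, |A i i| < s := by
    intro i
    have h1 : |A i i| ≤ ∑ j, |A j j| :=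
      Finset.single_le_sum (f := fun j => |A j j|) (fun j _ => abs_nonneg _) (Finset.mem_univ i)
    rw [hsdef]; linarith
  have hs0 : 0 < s := lt_of_le_of_lt (abs_nonneg (A ⟨0, hn⟩ ⟨0, hn⟩)) (hs1 _)
  have hs2 : ∀ μ ∈ R, ‖μ + s‖ < s := by
    intro μ hμ
    have hterm' : (‖μ‖)^2 / (2 * (-μ.re)) < s := by
      have h1 := Finset.single_le_sum hterm hμ
      rw [hsdef]; linarith
    have hre := hRneg μ hμ
    have key : (‖μ + s‖)^2 < s^2 := by
      have e1 : (‖μ + (s:ℂ)‖)^2 = (‖μ‖)^2 + 2*s*μ.re + s^2 := by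
        rw [Complex.sq_norm, Complex.sq_norm]
        simp [Complex.normSq_apply]
        ring
      have h2 : (‖μ‖)^2 < 2 * (-μ.re) * s := by
        rw [div_lt_iff₀ (by linarith)] at hterm'
        linarith
      rw [e1]
      nlinarith
    exact lt_of_pow_lt_pow_left₀ 2 hs0.le key
  -- the shifted nonnegative matrix
  set B : Matrix (Fin n) (Fin n) ℝ := A + s • (1 : Matrix (Fin n) (Fin n) ℝ) with hBdef
  have hBnn : ∀ i j, 0 ≤ B i j := by
    intro i j
    by_cases h : i = j
    · subst h
      have : B i i = A i i + s := by simp [hBdef, Matrix.one_apply]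
      rw [this]
      have := hs1 i
      have := abs_le.mp (le_of_lt (hs1 i))
      linarith [(abs_le.mp (hs1 i).le).1]
    · have : B i j = A i j := by simp [hBdef, Matrix.one_apply, h]
      rw [this]
      exact hA i j h
  have hBknn : ∀ k i j, 0 ≤ (B ^ k) i j := by
    intro k
    induction k with
    | zero => intro i j; by_cases h : i = j <;> simp [Matrix.one_apply, h]
    | succ k ih =>
      intro i j
      rw [pow_succ, Matrix.mul_apply]
      exact Finset.sum_nonneg fun l _ => mul_nonneg (ih i l) (hBnn l j)
  set Bc : Matrix (Fin n) (Fin n) ℂ := B.map (algebraMap ℝ ℂ) with hBcdef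
  have hmapk : ∀ k : ℕ, (B ^ k).map (algebraMap ℝ ℂ) = Bc ^ k := by
    intro k
    have := map_pow ((algebraMap ℝ ℂ).mapMatrix) B k
    simpa [RingHom.mapMatrix_apply, hBcdef] using this
  -- spectrum of Bc
  have hspec : ∀ lam ∈ spectrum ℂ Bc, ∃ μ ∈ R, lam = μ + s := by
    intro lam hlam
    rw [mem_spectrum_iff_det] at hlam
    have hmat : Matrix.scalar (Fin n) lam - Bc
        = Matrix.scalar (Fin n) (lam - s) - A.map (algebraMap ℝ ℂ) := by
      ext i j
      by_cases h : i = j <;>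
        simp [Matrix.scalar_apply, hBcdef, hBdef, Matrix.map_apply, Matrix.diagonal,
          Matrix.one_apply, h] <;> push_cast <;> ring
    rw [hmat] at hlam
    refine ⟨lam - s, Multiset.mem_toFinset.mpr ((mem_aroots_iff_det A _).mpr hlam), by ring⟩
  -- spectral radius bound
  set t : ℝ≥0 := R.sup fun μ => (‖μ + s‖).toNNReal with htdef
  have hts : t < s.toNNReal := by
    rw [htdef]
    apply Finset.sup_lt_iff (Real.toNNReal_pos.mpr hs0) |>.mpr
    intro μ hμ
    exact (Real.toNNReal_lt_toNNReal_iff hs0).mpr (hs2 μ hμ)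
  have hsr : spectralRadius ℂ Bc < (s.toNNReal : ℝ≥0∞) := by
    have hle : spectralRadius ℂ Bc ≤ (t : ℝ≥0∞) := by
      rw [spectralRadius]
      apply iSup₂_le
      intro lam hlam
      obtain ⟨μ, hμ, rfl⟩ := hspec lam hlam
      have : ‖μ + (s:ℂ)‖₊ = (‖μ + s‖).toNNReal := by
        ext
        simp [Real.coe_toNNReal _ (norm_nonneg _)]
      rw [this]
      exact ENNReal.coe_le_coe.mpr
        (Finset.le_sup (f := fun μ => (‖μ + (s:ℂ)‖).toNNReal) hμ)
    exact lt_of_le_of_lt hle (ENNReal.coe_lt_coe.mpr hts)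
  -- Gelfand
  obtain ⟨k, hk, hk1⟩ :
      ∃ k : ℕ, (‖Bc ^ k‖₊ : ℝ≥0∞) ^ (1 / (k:ℝ)) < (s.toNNReal : ℝ≥0∞) ∧ 1 ≤ k := by
    have hgel := spectrum.pow_nnnorm_pow_one_div_tendsto_nhds_spectralRadius Bc
    exact ((hgel.eventually_lt_const hsr).and (eventually_ge_atTop 1)).exists
  have hknorm : ‖Bc ^ k‖₊ < s.toNNReal ^ k := by
    have hk0 : (k:ℝ) ≠ 0 := Nat.cast_ne_zero.mpr (by omega)
    have h := ENNReal.rpow_lt_rpow hk (by positivity : (0:ℝ) < (k:ℝ))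
    rw [← ENNReal.rpow_mul, one_div, inv_mul_cancel₀ hk0, ENNReal.rpow_one] at h
    rw [ENNReal.rpow_natCast, ← ENNReal.coe_pow] at h
    exact_mod_cast h
  have hnormeq : ‖B ^ k‖₊ = ‖Bc ^ k‖₊ := by
    rw [← hmapk k]
    simp [Matrix.linfty_opNNNorm_def, Matrix.map_apply]
  have hBkreal : ‖B ^ k‖ < s ^ k := by
    have h1 : ‖B ^ k‖₊ < (s ^ k).toNNReal := by
      rw [hnormeq, Real.toNNReal_pow hs0.le]
      exact hknorm
    have h2 : (‖B ^ k‖₊ : ℝ) < ((s ^ k).toNNReal : ℝ) := by exact_mod_cast h1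
    rwa [coe_nnnorm, Real.coe_toNNReal _ (by positivity)] at h2
  have hrow : ∀ i, ∑ j, (B ^ k) i j < s ^ k := by
    intro i
    have h1 : ∑ j, ‖(B ^ k) i j‖₊ ≤ ‖B ^ k‖₊ := by
      rw [Matrix.linfty_opNNNorm_def]
      exact Finset.le_sup (f := fun i => ∑ j, ‖(B ^ k) i j‖₊) (Finset.mem_univ i)
    calc ∑ j, (B ^ k) i j = ∑ j, ‖(B ^ k) i j‖ := by
          refine Finset.sum_congr rfl fun j _ => ?_
          rw [Real.norm_eq_abs, abs_of_nonneg (hBknn k i j)]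
      _ = ((∑ j, ‖(B ^ k) i j‖₊ : ℝ≥0) : ℝ) := by push_cast; rfl
      _ ≤ (‖B ^ k‖₊ : ℝ) := by exact_mod_cast h1
      _ < s ^ k := hBkreal
  -- construct the vector
  set x : Fin n → ℝ :=
    ∑ m ∈ Finset.range k, (s ^ (m+1))⁻¹ • (B ^ m).mulVec (fun _ => 1) with hxdef
  have hxapp : ∀ i, x i = ∑ m ∈ Finset.range k, (s ^ (m+1))⁻¹ * ∑ j, (B ^ m) i j := by
    intro i
    rw [hxdef]
    rw [Finset.sum_apply]
    refine Finset.sum_congr rfl fun m _ => ?_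
    simp [Matrix.mulVec, dotProduct]
  have hxpos : ∀ i, 0 < x i := by
    intro i
    rw [hxapp i]
    apply Finset.sum_pos'
    · intro m _
      exact mul_nonneg (by positivity) (Finset.sum_nonneg fun j _ => hBknn m i j)
    · refine ⟨0, Finset.mem_range.mpr (by omega), ?_⟩
      simp [Matrix.one_apply]
      positivity
  refine ⟨x, hxpos, ?_⟩
  -- compute A *ᵥ x
  have hAB : ∀ m : ℕ, A * B ^ m = B ^ (m+1) - s • B ^ m := by
    intro m
    have : A = B - s • 1 := by rw [hBdef, add_sub_cancel_right]
    rw [this, sub_mul, pow_succ', Matrix.smul_mul, Matrix.one_mul]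
  have hAx : A.mulVec x = (s ^ k)⁻¹ • (B ^ k).mulVec (fun _ => 1) - (fun _ => 1) := by
    have step : A.mulVec x
        = ∑ m ∈ Finset.range k,
            ((s ^ (m+1))⁻¹ • (B ^ (m+1)).mulVec (fun _ => 1)
              - (s ^ m)⁻¹ • (B ^ m).mulVec (fun _ => 1)) := by
      rw [hxdef, ← Matrix.mulVecLin_apply, map_sum]
      refine Finset.sum_congr rfl fun m _ => ?_
      rw [_root_.map_smul, Matrix.mulVecLin_apply, Matrix.mulVec_mulVec, hAB m, Matrix.sub_mulVec,
        Matrix.smul_mulVec, smul_sub, smul_smul]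
      congr 1
      have hsne : s ≠ 0 := hs0.ne'
      rw [pow_succ, mul_inv, mul_assoc, inv_mul_cancel₀ hsne, mul_one]
    rw [step, Finset.sum_range_sub (fun m => (s ^ m)⁻¹ • (B ^ m).mulVec (fun _ => 1))]
    simp
  intro i
  rw [hAx]
  have : (B ^ k).mulVec (fun _ => 1) i = ∑ j, (B ^ k) i j := by
    simp [Matrix.mulVec, dotProduct]
  simp only [Pi.sub_apply, Pi.smul_apply, smul_eq_mul, this]
  have hpow : (0:ℝ) < s ^ k := by positivity
  have := hrow i
  rw [sub_neg]
  calc (s ^ k)⁻¹ * ∑ j, (B ^ k) i j < (s ^ k)⁻¹ * s ^ k := by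
        exact mul_lt_mul_of_pos_left (hrow i) (by positivity)
    _ = 1 := inv_mul_cancel₀ hpow.ne'

end MetzlerAuxForward

lemma backward_dir {n : ℕ} (A : Matrix (Fin n) (Fin n) ℝ) (hA : IsMetzler A)
    (x : Fin n → ℝ) (hx : ∀ i, 0 < x i) (hAx : ∀ i, A.mulVec x i < 0) :
    IsHurwitz A := by
  intro μ hμ
  rw [mem_aroots_iff_det] at hμ
  obtain ⟨v, hv0, hv⟩ := Matrix.exists_mulVec_eq_zero_iff.mpr hμ
  -- turn hv into an eigen equation
  have hAv : ∀ i, μ * v i = ∑ j, (A i j : ℂ) * v j := by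
    intro i
    have := congrFun hv i
    simp only [Matrix.sub_mulVec, Pi.sub_apply, Pi.zero_apply, sub_eq_zero] at this
    have h1 : (Matrix.scalar (Fin n) μ).mulVec v i = μ * v i := by
      simp [Matrix.mulVec, dotProduct, Matrix.scalar_apply, Matrix.diagonal,
        Finset.sum_ite_eq, mul_comm]
    have h2 : ((A.map (algebraMap ℝ ℂ)).mulVec v) i = ∑ j, (A i j : ℂ) * v j := by
      simp [Matrix.mulVec, dotProduct, Matrix.map_apply]
    rw [← h1, this, h2]
  -- pick maximizing index
  obtain ⟨j₀, hj₀⟩ : ∃ j, v j ≠ 0 := by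
    by_contra h
    push_neg at h
    exact hv0 (funext h)
  obtain ⟨i, -, hi⟩ := Finset.exists_max_image Finset.univ
    (fun j => ‖v j‖ / x j) ⟨j₀, Finset.mem_univ j₀⟩
  have hvi : 0 < ‖v i‖ := by
    have h1 : 0 < ‖v j₀‖ / x j₀ :=
      div_pos (by simpa using hj₀) (hx j₀)
    have := hi j₀ (Finset.mem_univ j₀)
    have h2 : 0 < ‖v i‖ / x i := lt_of_lt_of_le h1 this
    have h3 := mul_pos h2 (hx i)
    rwa [div_mul_cancel₀ _ (hx i).ne'] at h3
  have hbound : ∀ j, ‖v j‖ ≤ ‖v i‖ / x i * x j := by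
    intro j
    have := hi j (Finset.mem_univ j)
    calc ‖v j‖ = ‖v j‖ / x j * x j :=
          (div_mul_cancel₀ _ (hx j).ne').symm
      _ ≤ ‖v i‖ / x i * x j :=
          mul_le_mul_of_nonneg_right this (hx j).le
  -- main estimate
  have key : ‖μ - A i i‖ * ‖v i‖ < -A i i * ‖v i‖ := by
    have heq : (μ - (A i i : ℂ)) * v i = ∑ j ∈ Finset.univ.erase i, (A i j : ℂ) * v j := by
      have := hAv i
      rw [← Finset.add_sum_erase _ (fun j => (A i j : ℂ) * v j) (Finset.mem_univ i)] at this
      rw [sub_mul, this]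
      ring
    calc ‖μ - A i i‖ * ‖v i‖
        = ‖(μ - (A i i : ℂ)) * v i‖ := (norm_mul _ _).symm
      _ = ‖∑ j ∈ Finset.univ.erase i, (A i j : ℂ) * v j‖ := by rw [heq]
      _ ≤ ∑ j ∈ Finset.univ.erase i, ‖(A i j : ℂ) * v j‖ :=
          norm_sum_le _ _
      _ = ∑ j ∈ Finset.univ.erase i, A i j * ‖v j‖ := by
          apply Finset.sum_congr rfl
          intro j hj
          rw [norm_mul, Complex.norm_real, Real.norm_eq_abs,
            abs_of_nonneg (hA i j (Finset.ne_of_mem_erase hj).symm)]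
      _ ≤ ∑ j ∈ Finset.univ.erase i, A i j * (‖v i‖ / x i * x j) := by
          apply Finset.sum_le_sum
          intro j hj
          exact mul_le_mul_of_nonneg_left (hbound j) (hA i j (Finset.ne_of_mem_erase hj).symm)
      _ = (‖v i‖ / x i) * ∑ j ∈ Finset.univ.erase i, A i j * x j := by
          rw [Finset.mul_sum]; apply Finset.sum_congr rfl; intros; ring
      _ < (‖v i‖ / x i) * (-(A i i * x i)) := by
          apply mul_lt_mul_of_pos_left _ (div_pos hvi (hx i))
          have hsum := hAx i
          rw [Matrix.mulVec, dotProduct,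
            ← Finset.add_sum_erase _ (fun j => A i j * x j) (Finset.mem_univ i)] at hsum
          linarith
      _ = (‖v i‖ / x i * x i) * (-(A i i)) := by ring
      _ = -A i i * ‖v i‖ := by
          rw [div_mul_cancel₀ _ (hx i).ne']; ring
  have habs : ‖μ - A i i‖ < -A i i := lt_of_mul_lt_mul_right key hvi.le
  have hre : μ.re - A i i ≤ ‖μ - A i i‖ := by
    have := Complex.re_le_norm (μ - (A i i : ℂ))
    simpa using this
  linarith

end MetzlerAux

/-- A Metzler matrix is Hurwitz iff there is a strictly positive vector x with Ax ≪ 0. -/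
theorem metzler_hurwitz_iff_exists_pos_vec_mulVec_neg
    {n : ℕ} (A : Matrix (Fin n) (Fin n) ℝ) (hA : IsMetzler A) :
    IsHurwitz A ↔ ∃ x : Fin n → ℝ, (∀ i, 0 < x i) ∧ ∀ i, A.mulVec x i < 0 := by
  constructor
  · exact forward_dir A hA
  · rintro ⟨x, hx, hAx⟩
    exact backward_dir A hA x hx hAx
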